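/- Let Γ be an unbounded subset of ℂ and let B be the backward shift operator on ℓ²(ℕ,ℂ), defined by (Bx)(n) = x(n+1) for all n ∈ ℕ. Then B is Γ-supercyclic, i.e. there exists x ∈ ℓ²(ℕ,ℂ) such that {γ·B^n x : γ ∈ Γ, n ∈ ℕ} is dense in ℓ²(ℕ,ℂ), but B is not hypercyclic, i.e. no vector y ∈ ℓ²(ℕ,ℂ) has {B^n y : n ∈ ℕ} dense in ℓ²(ℕ,ℂ). -/

import Mathlib

set_option maxHeartbeats 1000000
noncomputable section
open scoped ENNReal

local notation "H" => lp (fun _ : ℕ => ℂ) 2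

lemma htp : (0:ℝ) < (2 : ℝ≥0∞).toReal := by norm_num

def cc : ℚ × ℚ → ℂ := fun q => (q.1 : ℂ) + (q.2 : ℂ) * Complex.I

@[simp] lemma cc_zero : cc 0 = 0 := by simp [cc]

lemma rat_dense (z : ℂ) {ε : ℝ} (hε : 0 < ε) : ∃ q : ℚ × ℚ, ‖z - cc q‖ < ε := by
  obtain ⟨q1, h1⟩ := exists_rat_near z.re (half_pos hε)
  obtain ⟨q2, h2⟩ := exists_rat_near z.im (half_pos hε)
  refine ⟨(q1, q2), ?_⟩
  have hre : (z - cc (q1, q2)).re = z.re - q1 := by simp [cc]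
  have him : (z - cc (q1, q2)).im = z.im - q2 := by simp [cc]
  calc ‖z - cc (q1, q2)‖ ≤ |(z - cc (q1, q2)).re| + |(z - cc (q1, q2)).im| :=
        Complex.norm_le_abs_re_add_abs_im _
    _ < ε := by rw [hre, him]; linarith

def msupp (q : ℕ →₀ ℚ × ℚ) : ℕ := q.support.sup id + 1

lemma msupp_spec (q : ℕ →₀ ℚ × ℚ) (i : ℕ) (hi : msupp q ≤ i) : q i = 0 := by
  by_contra h
  have : i ∈ q.support := Finsupp.mem_support_iff.mpr h
  have := Finset.le_sup (f := id) this
  simp only [id] at this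
  simp only [msupp] at hi
  omega

def toLp (q : ℕ →₀ ℚ × ℚ) : H := ∑ i ∈ Finset.range (msupp q), lp.single 2 i (cc (q i))

lemma toLp_apply (q : ℕ →₀ ℚ × ℚ) (j : ℕ) : (toLp q : ∀ _ : ℕ, ℂ) j = cc (q j) := by
  rw [toLp, lp.coeFn_sum]
  simp only [Finset.sum_apply, lp.single_apply]
  by_cases hj : j < msupp q
  · simp [Finset.sum_dite_eq, Finset.mem_range, hj]
  · push_neg at hj
    rw [msupp_spec q j hj]
    simp [Finset.sum_dite_eq, Finset.mem_range, not_lt.mpr hj]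

lemma trunc_dense (v : H) {ε : ℝ} (hε : 0 < ε) :
    ∃ N : ℕ, ‖v - ∑ i ∈ Finset.range N, lp.single 2 i (v i)‖ < ε := by
  have hs := lp.hasSum_single (by norm_num : (2:ℝ≥0∞) ≠ ⊤) v
  rw [HasSum, SummationFilter.unconditional_filter, Metric.tendsto_atTop] at hs
  obtain ⟨s₀, hs₀⟩ := hs ε hε
  refine ⟨s₀.sup id + 1, ?_⟩
  have hsub : s₀ ⊆ Finset.range (s₀.sup id + 1) := by
    intro i hi
    have := Finset.le_sup (f := id) hi
    simp only [id] at this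
    simp only [Finset.mem_range]
    omega
  have := hs₀ _ hsub
  rwa [dist_comm, dist_eq_norm] at this

lemma toLp_dense (v : H) {ε : ℝ} (hε : 0 < ε) : ∃ q : ℕ →₀ ℚ × ℚ, ‖v - toLp q‖ < ε := by
  obtain ⟨N, hN⟩ := trunc_dense v (half_pos hε)
  have hδ : 0 < ε / (2 * (N + 1)) := by positivity
  have hre : ∀ i : ℕ, ∃ r : ℚ × ℚ, ‖(v : ∀ _ : ℕ, ℂ) i - cc r‖ < ε / (2 * (N + 1)) :=
    fun i => rat_dense _ hδ
  choose r hr using hre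
  refine ⟨∑ i ∈ Finset.range N, Finsupp.single i (r i), ?_⟩
  set q : ℕ →₀ ℚ × ℚ := ∑ i ∈ Finset.range N, Finsupp.single i (r i) with hq
  have hqapp : ∀ j : ℕ, q j = if j < N then r j else 0 := by
    intro j
    rw [hq, Finsupp.finset_sum_apply]
    by_cases hj : j < N
    · rw [if_pos hj, Finset.sum_eq_single_of_mem j (Finset.mem_range.mpr hj)]
      · simp
      · intro b _ hbj; exact Finsupp.single_eq_of_ne' hbj
    · rw [if_neg hj, Finset.sum_eq_zero]
      intro b hb
      exact Finsupp.single_eq_of_ne (by simp at hb; omega)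
  set g : H := (∑ i ∈ Finset.range N, lp.single 2 i (v i)) - toLp q with hg
  have hgapp : ∀ j : ℕ, (g : ∀ _ : ℕ, ℂ) j =
      (if j < N then (v : ∀ _ : ℕ, ℂ) j else 0) - cc (q j) := by
    intro j
    rw [hg, lp.coeFn_sub, Pi.sub_apply, toLp_apply q j, lp.coeFn_sum]
    simp only [Finset.sum_apply, lp.single_apply]
    congr 1
    by_cases hj : j < N
    · simp [Finset.sum_dite_eq, Finset.mem_range, hj]
    · simp [Finset.sum_dite_eq, Finset.mem_range, hj]
  have hgsupp : ∀ j : ℕ, N ≤ j → (g : ∀ _ : ℕ, ℂ) j = 0 := by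
    intro j hj
    rw [hgapp j, if_neg (by omega), hqapp j, if_neg (by omega), cc_zero, sub_zero]
  have hgeq : g = ∑ i ∈ Finset.range N, lp.single 2 i ((g :  ∀ _ : ℕ, ℂ) i) := by
    apply lp.ext
    funext j
    rw [lp.coeFn_sum]
    simp only [Finset.sum_apply, lp.single_apply]
    by_cases hj : j < N
    · simp [Finset.sum_dite_eq, Finset.mem_range, hj]
    · rw [hgsupp j (not_lt.mp hj)]
      simp [Finset.sum_dite_eq, Finset.mem_range, hj]
  have hgn : ‖g‖ ≤ ∑ i ∈ Finset.range N, ‖(g : ∀ _ : ℕ, ℂ) i‖ := by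
    conv_lhs => rw [hgeq]
    refine (norm_sum_le _ _).trans ?_
    refine Finset.sum_le_sum fun i _ => ?_
    exact (lp.norm_single (by norm_num) i _).le
  have hbound : ∑ i ∈ Finset.range N, ‖(g : ∀ _ : ℕ, ℂ) i‖ < ε / 2 := by
    calc ∑ i ∈ Finset.range N, ‖(g : ∀ _ : ℕ, ℂ) i‖
        ≤ ∑ _i ∈ Finset.range N, (ε / (2 * (N + 1))) := by
          refine Finset.sum_le_sum fun i hi => ?_
          rw [hgapp i, if_pos (Finset.mem_range.mp hi), hqapp i,
            if_pos (Finset.mem_range.mp hi)]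
          exact (hr i).le
      _ = N * (ε / (2 * (N + 1))) := by rw [Finset.sum_const, Finset.card_range]; ring
      _ < ε / 2 := by
          have hN1 : (0:ℝ) < (N:ℝ) + 1 := by positivity
          have heq : (N:ℝ) * (ε / (2 * ((N:ℝ) + 1))) = (ε/2) * ((N:ℝ)/((N:ℝ)+1)) := by
            field_simp
          rw [heq]
          have hlt : (N:ℝ)/((N:ℝ)+1) < 1 := by rw [div_lt_one hN1]; linarith
          calc (ε/2) * ((N:ℝ)/((N:ℝ)+1)) < (ε/2) * 1 :=
                mul_lt_mul_of_pos_left hlt (by positivity)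
            _ = ε/2 := mul_one _
  have : ‖v - toLp q‖ ≤ ‖v - ∑ i ∈ Finset.range N, lp.single 2 i (v i)‖ + ‖g‖ := by
    have : v - toLp q = (v - ∑ i ∈ Finset.range N, lp.single 2 i (v i)) + g := by
      rw [hg]; abel
    rw [this]; exact norm_add_le _ _
  have : ‖v - toLp q‖ < ε / 2 + ε / 2 := by
    refine lt_of_le_of_lt this ?_
    have := lt_of_le_of_lt hgn hbound
    linarith
  linarith

variable (B : H →L[ℂ] H)
  (hB : ∀ (x : H) (n : ℕ), (B x : ∀ _ : ℕ, ℂ) n = (x : ∀ _ : ℕ, ℂ) (n + 1))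
include hB

lemma Bpow_apply (x : H) (n j : ℕ) : ((B ^ n) x : ∀ _ : ℕ, ℂ) j = (x : ∀ _ : ℕ, ℂ) (j + n) := by
  induction n generalizing x j with
  | zero => simp
  | succ n ih =>
    rw [pow_succ, ContinuousLinearMap.mul_apply, ih (B x) j, hB, ← add_assoc]

lemma Bn_norm_le (y : H) (n : ℕ) : ‖(B ^ n) y‖ ≤ ‖y‖ := by
  rw [← Real.rpow_le_rpow_iff (lp.norm_nonneg' _) (lp.norm_nonneg' _) htp]
  rw [lp.norm_rpow_eq_tsum htp, lp.norm_rpow_eq_tsum htp]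
  refine Summable.tsum_le_tsum_of_inj (· + n) (add_left_injective n)
    (fun c _ => Real.rpow_nonneg (norm_nonneg _) _)
    (fun j => by rw [Bpow_apply B hB y n j])
    ((lp.memℓp _).summable htp) ((lp.memℓp _).summable htp)

lemma single_shift (n i : ℕ) (a : ℂ) : (B ^ n) (lp.single 2 (n + i) a) = lp.single 2 i a := by
  apply lp.ext
  funext j
  rw [Bpow_apply B hB]
  rw [lp.single_apply, lp.single_apply]
  by_cases h : j = i
  · subst h; rw [Pi.single_apply, if_pos (by omega), Pi.single_apply, if_pos rfl]
  · rw [Pi.single_apply, if_neg (by omega), Pi.single_apply, if_neg h]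

lemma single_kill (n i : ℕ) (hi : i < n) (a : ℂ) : (B ^ n) (lp.single 2 i a) = 0 := by
  apply lp.ext
  funext j
  rw [Bpow_apply B hB]
  rw [lp.single_apply]
  rw [Pi.single_apply, if_neg (by omega)]
  rfl

lemma not_hc : ¬∃ y : H, Dense {z : H | ∃ n : ℕ, z = (B ^ n) y} := by
  rintro ⟨y, hd⟩
  set z : H := ((‖y‖ + 2 : ℝ) : ℂ) • lp.single 2 0 (1 : ℂ) with hzdef
  have hz : ‖z‖ = ‖y‖ + 2 := by
    rw [hzdef, norm_smul]
    have h1 : ‖(lp.single 2 0 (1:ℂ) : H)‖ = 1 := by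
      have := lp.norm_single (E := fun _ : ℕ => ℂ) (p := 2) (by norm_num) 0 (1:ℂ)
      simpa using this
    rw [h1, mul_one, Complex.norm_real, Real.norm_eq_abs,
      abs_of_nonneg (by positivity)]
  obtain ⟨w, hw1, n, rfl⟩ := Metric.dense_iff.mp hd z 1 one_pos
  rw [Metric.mem_ball, dist_eq_norm] at hw1
  have h2 : ‖(B ^ n) y‖ ≤ ‖y‖ := Bn_norm_le B hB y n
  have h3 : ‖z‖ ≤ ‖(B ^ n) y‖ + ‖z - (B ^ n) y‖ := by
    simpa using norm_add_le ((B ^ n) y) (z - (B ^ n) y)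
  rw [← norm_neg (z - (B ^ n) y), neg_sub] at h3
  rw [hz] at h3
  linarith

lemma part1 (Γ : Set ℂ) (hΓ : ¬Bornology.IsBounded Γ) :
    ∃ x : H, Dense {y : H | ∃ γ ∈ Γ, ∃ n : ℕ, y = γ • (B ^ n) x} := by
  classical
  have hΓ' : ∀ R : ℝ, ∃ γ ∈ Γ, R < ‖γ‖ := by
    intro R
    by_contra h
    push_neg at h
    exact hΓ (isBounded_iff_forall_norm_le.mpr ⟨R, h⟩)
  obtain ⟨e, he⟩ := exists_surjective_nat (ℕ →₀ ℚ × ℚ)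
  set d : ℕ → (ℕ →₀ ℚ × ℚ) := fun k => e (Nat.unpair k).1 with hd_def
  set a : ℕ → ℕ → ℂ := fun k i => cc (d k i) with ha_def
  set m : ℕ → ℕ := fun k => msupp (d k) with hm_def
  set w : ℕ → H := fun k => toLp (d k) with hw_def
  set o : ℕ → ℕ := fun k => ∑ j ∈ Finset.range k, m j with ho_def
  set X : ℕ → H := fun k =>
    ∑ i ∈ Finset.range (m k), lp.single 2 (o k + i) (a k i) with hX_def
  have hwX : ∀ k, w k = ∑ i ∈ Finset.range (m k), lp.single 2 i (a k i) := fun k => rfl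
  have homono : ∀ j k : ℕ, j ≤ k → o j ≤ o k := by
    intro j k hjk
    exact Finset.sum_le_sum_of_subset (Finset.range_subset_range.mpr hjk)
  have hosucc : ∀ k, o (k + 1) = o k + m k := by
    intro k
    simp only [ho_def]
    exact Finset.sum_range_succ m k
  -- choice of scalars
  have hch : ∀ (k : ℕ) (M : ℝ), ∃ γ : ℂ, γ ∈ Γ ∧
      (4:ℝ)^k * (1 + ‖X k‖) * (1 + max M 0) < ‖γ‖ := by
    intro k M
    obtain ⟨γ, h1, h2⟩ := hΓ' ((4:ℝ)^k * (1 + ‖X k‖) * (1 + max M 0))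
    exact ⟨γ, h1, h2⟩
  choose F hF1 hF2 using hch
  set G : ℕ → ℂ × ℝ := fun k =>
    Nat.rec (F 0 0, max 0 ‖F 0 0‖) (fun k p => (F (k+1) p.2, max p.2 ‖F (k+1) p.2‖)) k
    with hG_def
  set γ : ℕ → ℂ := fun k => (G k).1 with hγ_def
  set M : ℕ → ℝ := fun k => (G k).2 with hM_def
  have hγ0 : γ 0 = F 0 0 := rfl
  have hM0 : M 0 = max 0 ‖F 0 0‖ := rfl
  have hγs : ∀ k, γ (k+1) = F (k+1) (M k) := fun k => rfl
  have hMs : ∀ k, M (k+1) = max (M k) ‖F (k+1) (M k)‖ := fun k => rfl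
  have hγΓ : ∀ k, γ k ∈ Γ := by
    intro k
    cases k with
    | zero => rw [hγ0]; exact hF1 0 0
    | succ k => rw [hγs]; exact hF1 (k+1) (M k)
  have hMnn : ∀ k, 0 ≤ M k := by
    intro k
    induction k with
    | zero => rw [hM0]; exact le_max_left 0 _
    | succ k ih => rw [hMs]; exact ih.trans (le_max_left _ _)
  have hMmono : Monotone M := by
    apply monotone_nat_of_le_succ
    intro k
    rw [hMs]
    exact le_max_left _ _
  have hγM : ∀ k, ‖γ k‖ ≤ M k := by
    intro k
    cases k with
    | zero => rw [hγ0, hM0]; exact le_max_right _ _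
    | succ k => rw [hγs, hMs]; exact le_max_right _ _
  have hγlt2 : ∀ k, (4:ℝ)^(k+1) * (1 + ‖X (k+1)‖) * (1 + M k) < ‖γ (k+1)‖ := by
    intro k
    rw [hγs k]
    have h := hF2 (k+1) (M k)
    rwa [max_eq_left (hMnn k)] at h
  have hγlt : ∀ k, (4:ℝ)^k * (1 + ‖X k‖) ≤ ‖γ k‖ := by
    intro k
    cases k with
    | zero =>
      rw [hγ0]
      have h := hF2 0 0
      simp only [max_self, add_zero, mul_one] at h
      simpa using h.le
    | succ k =>
      have h := hγlt2 k
      have hA : (0:ℝ) ≤ (4:ℝ)^(k+1) * (1 + ‖X (k+1)‖) := by positivity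
      nlinarith [hMnn k]
  have hγ1 : ∀ k, 1 ≤ ‖γ k‖ := by
    intro k
    refine le_trans ?_ (hγlt k)
    have h4 : (1:ℝ) ≤ 4 ^ k := one_le_pow₀ (by norm_num)
    nlinarith [norm_nonneg (X k)]
  have hγpos : ∀ k, (0:ℝ) < ‖γ k‖ := fun k => lt_of_lt_of_le one_pos (hγ1 k)
  have hγne : ∀ k, γ k ≠ 0 := fun k => norm_pos_iff.mp (hγpos k)
  have hkey2 : ∀ k j, k < j → (4:ℝ)^j * ‖X j‖ * ‖γ k‖ ≤ ‖γ j‖ := by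
    intro k j hkj
    obtain ⟨j', rfl⟩ : ∃ j', j = j' + 1 := ⟨j - 1, by omega⟩
    have hkj' : k ≤ j' := by omega
    have h1 : ‖γ k‖ ≤ M j' := (hγM k).trans (hMmono hkj')
    have h2 := hγlt2 j'
    have h4 : (0:ℝ) < (4:ℝ)^(j'+1) := by positivity
    have hXnn := norm_nonneg (X (j'+1))
    have step : ‖X (j'+1)‖ * ‖γ k‖ ≤ (1 + ‖X (j'+1)‖) * (1 + M j') := by
      nlinarith [mul_le_mul_of_nonneg_left h1 hXnn, hMnn j', (hγpos k).le]
    calc (4:ℝ)^(j'+1) * ‖X (j'+1)‖ * ‖γ k‖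
        = (4:ℝ)^(j'+1) * (‖X (j'+1)‖ * ‖γ k‖) := by ring
      _ ≤ (4:ℝ)^(j'+1) * ((1 + ‖X (j'+1)‖) * (1 + M j')) :=
          mul_le_mul_of_nonneg_left step h4.le
      _ = (4:ℝ)^(j'+1) * (1 + ‖X (j'+1)‖) * (1 + M j') := by ring
      _ ≤ ‖γ (j'+1)‖ := h2.le
  set u : ℕ → H := fun k => (γ k)⁻¹ • X k with hu_def
  have h41 : ∀ J : ℕ, (4:ℝ)^J * (1/4:ℝ)^J = 1 := by
    intro J
    rw [← mul_pow]
    norm_num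
  have hu_norm : ∀ k, ‖u k‖ ≤ (1/4:ℝ)^k := by
    intro k
    have : ‖u k‖ = ‖γ k‖⁻¹ * ‖X k‖ := by
      rw [hu_def]
      simp [norm_smul]
    rw [this, inv_mul_le_iff₀ (hγpos k)]
    calc ‖X k‖ ≤ (1 + ‖X k‖) * ((4:ℝ)^k * (1/4:ℝ)^k) := by
          rw [h41 k, mul_one]
          linarith [norm_nonneg (X k)]
      _ = ((4:ℝ)^k * (1 + ‖X k‖)) * (1/4:ℝ)^k := by ring
      _ ≤ ‖γ k‖ * (1/4:ℝ)^k := mul_le_mul_of_nonneg_right (hγlt k) (by positivity)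
  have hu_sum : Summable u :=
    Summable.of_norm_bounded (summable_geometric_of_lt_one (by norm_num) (by norm_num)) hu_norm
  set x : H := ∑' k, u k with hx_def
  have hxsum : HasSum u x := hu_sum.hasSum
  have key : ∀ k, ‖γ k • (B ^ (o k)) x - w k‖ ≤ (1/4:ℝ)^k := by
    intro k
    set L : H →L[ℂ] H := γ k • (B ^ (o k)) with hL_def
    have hLx' : L x = γ k • (B ^ (o k)) x := rfl
    have hLx : HasSum (fun j => L (u j)) (L x) := hxsum.mapL L
    have hLu : ∀ j, L (u j) = (γ k * (γ j)⁻¹) • (B ^ (o k)) (X j) := by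
      intro j
      rw [hL_def, hu_def]
      simp only [ContinuousLinearMap.smul_apply, map_smul, smul_smul]
      rw [mul_comm]
    have hBXlt : ∀ j, j < k → (B ^ (o k)) (X j) = 0 := by
      intro j hj
      rw [hX_def]
      simp only [map_sum]
      refine Finset.sum_eq_zero fun i hi => ?_
      refine single_kill B hB (o k) (o j + i) ?_ (a j i)
      have hi' : i < m j := Finset.mem_range.mp hi
      have : o j + i < o (j + 1) := by rw [hosucc j]; omega
      have : o (j + 1) ≤ o k := homono _ _ (by omega)
      omega
    have hBXk : (B ^ (o k)) (X k) = w k := by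
      rw [hX_def]
      simp only [map_sum]
      rw [hwX k]
      exact Finset.sum_congr rfl fun i _ => single_shift B hB (o k) i (a k i)
    have ht0 : ∀ j, j < k → L (u j) = 0 := by
      intro j hj
      rw [hLu j, hBXlt j hj, smul_zero]
    have htk : L (u k) = w k := by
      rw [hLu k, hBXk, mul_inv_cancel₀ (hγne k), one_smul]
    have hLsummable : Summable (fun j => L (u j)) := hLx.summable
    have hsplit := Summable.sum_add_tsum_nat_add (f := fun j => L (u j)) (k+1) hLsummable
    have hLxtsum : ∑' j, L (u j) = L x := hLx.tsum_eq
    have hsum_eq : ∑ j ∈ Finset.range (k+1), L (u j) = w k := by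
      rw [Finset.sum_eq_single_of_mem k (Finset.self_mem_range_succ k)]
      · exact htk
      · intro j hj hne
        exact ht0 j (by simp only [Finset.mem_range] at hj; omega)
    have herr_eq : L x - w k = ∑' j, L (u (j + (k+1))) := by
      rw [← hLxtsum, ← hsplit, hsum_eq]
      abel
    have hterm : ∀ j, ‖L (u (j + (k+1)))‖ ≤ (1/4:ℝ)^(j + (k+1)) := by
      intro j
      set J := j + (k+1) with hJ
      have hkJ : k < J := by omega
      have hBn : ‖(B ^ (o k)) (X J)‖ ≤ ‖X J‖ := Bn_norm_le B hB (X J) (o k)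
      have h2 := hkey2 k J hkJ
      rw [hLu J, norm_smul, norm_mul, norm_inv]
      calc ‖γ k‖ * ‖γ J‖⁻¹ * ‖(B ^ (o k)) (X J)‖
          ≤ ‖γ k‖ * ‖γ J‖⁻¹ * ‖X J‖ := by
            refine mul_le_mul_of_nonneg_left hBn ?_
            have := (hγpos k).le
            have := (hγpos J).le
            positivity
        _ = (‖γ k‖ * ‖X J‖) / ‖γ J‖ := by rw [div_eq_mul_inv]; ring
        _ ≤ (1/4:ℝ)^J := by
            rw [div_le_iff₀ (hγpos J)]
            calc ‖γ k‖ * ‖X J‖ = ((1/4:ℝ)^J * (4:ℝ)^J) * (‖X J‖ * ‖γ k‖) := by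
                  rw [mul_comm ((1/4:ℝ)^J), h41 J, one_mul]
                  ring
              _ = (1/4:ℝ)^J * ((4:ℝ)^J * ‖X J‖ * ‖γ k‖) := by ring
              _ ≤ (1/4:ℝ)^J * ‖γ J‖ := by
                  refine mul_le_mul_of_nonneg_left h2 ?_
                  positivity
    have hgeo : Summable (fun j : ℕ => (1/4:ℝ)^(j + (k+1))) := by
      simpa [pow_add] using
        (summable_geometric_of_lt_one (by norm_num : (0:ℝ) ≤ 1/4) (by norm_num)).mul_right
          ((1/4:ℝ)^(k+1))
    have hns : Summable (fun j => ‖L (u (j + (k+1)))‖) :=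
      Summable.of_nonneg_of_le (fun _ => norm_nonneg _) hterm hgeo
    calc ‖γ k • (B ^ (o k)) x - w k‖ = ‖∑' j, L (u (j + (k+1)))‖ := by
          rw [← hLx', herr_eq]
      _ ≤ ∑' j, ‖L (u (j + (k+1)))‖ := norm_tsum_le_tsum_norm hns
      _ ≤ ∑' j : ℕ, (1/4:ℝ)^(j + (k+1)) := Summable.tsum_le_tsum hterm hns hgeo
      _ = (∑' j : ℕ, (1/4:ℝ)^j) * (1/4:ℝ)^(k+1) := by
          simp only [pow_add]
          exact tsum_mul_right
      _ ≤ (1/4:ℝ)^k := by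
          rw [tsum_geometric_of_lt_one (by norm_num) (by norm_num), pow_succ]
          have h : (0:ℝ) ≤ (1/4:ℝ)^k := by positivity
          nlinarith
  -- final density argument
  refine ⟨x, ?_⟩
  rw [Metric.dense_iff]
  intro v r hr
  obtain ⟨q, hq⟩ := toLp_dense v (half_pos hr)
  obtain ⟨j0, hj0⟩ := he q
  obtain ⟨M0, hM0'⟩ := exists_pow_lt_of_lt_one (half_pos hr) (by norm_num : (1:ℝ)/4 < 1)
  set k := Nat.pair j0 M0 with hk_def
  have hdk : d k = q := by
    rw [hd_def]
    simp only [hk_def, Nat.unpair_pair]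
    exact hj0
  have hk4 : (1/4:ℝ)^k < r/2 := by
    refine lt_of_le_of_lt ?_ hM0'
    exact pow_le_pow_of_le_one (by norm_num) (by norm_num) (Nat.right_le_pair j0 M0)
  have hwk : w k = toLp q := by rw [hw_def]; simp only [hdk]
  refine ⟨γ k • (B ^ (o k)) x, ?_, γ k, hγΓ k, o k, rfl⟩
  rw [Metric.mem_ball, dist_eq_norm]
  have hsplit : γ k • (B ^ (o k)) x - v = (γ k • (B ^ (o k)) x - w k) + (w k - v) := by
    abel
  calc ‖γ k • (B ^ (o k)) x - v‖
      ≤ ‖γ k • (B ^ (o k)) x - w k‖ + ‖w k - v‖ := by rw [hsplit]; exact norm_add_le _ _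
    _ < r/2 + r/2 := by
        refine add_lt_add_of_le_of_lt ((key k).trans hk4.le) ?_
        rw [hwk, norm_sub_rev]
        exact hq
    _ = r := by ring

end

/-- **Proposition 2.1.** If `Γ ⊆ ℂ` is unbounded, the backward shift `B` on `ℓ²(ℕ,ℂ)`,
given by `(Bx)(n) = x(n+1)`, is `Γ`-supercyclic but not hypercyclic. -/
theorem backwardShift_gamma_supercyclic_not_hypercyclic
    (Γ : Set ℂ) (hΓ : ¬Bornology.IsBounded Γ)
    (B : lp (fun _ : ℕ => ℂ) 2 →L[ℂ] lp (fun _ : ℕ => ℂ) 2)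
    (hB : ∀ (x : lp (fun _ : ℕ => ℂ) 2) (n : ℕ), (B x : ∀ _ : ℕ, ℂ) n = (x : ∀ _ : ℕ, ℂ) (n + 1)) :
    (∃ x : lp (fun _ : ℕ => ℂ) 2,
      Dense {y : lp (fun _ : ℕ => ℂ) 2 | ∃ γ ∈ Γ, ∃ n : ℕ, y = γ • (B ^ n) x}) ∧
    ¬∃ y : lp (fun _ : ℕ => ℂ) 2,
      Dense {z : lp (fun _ : ℕ => ℂ) 2 | ∃ n : ℕ, z = (B ^ n) y} := by
  exact ⟨part1 B hB Γ hΓ, not_hc B hB⟩
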